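/- Suppose a > 0, b ≥ 0, and x′(t) ≤ x(t)(b − a·x(t − τ(t))) for all t ≥ t₀. Then limsup_{t→+∞} x(t) ≤ (b/a)·e^{b·τ̄}. (Continuous-time case of Lemma 2.15(i) with d = 0.) -/

import Mathlib

open Filter

/-- Continuous-time case of Lemma 2.15(i) with `d = 0`: if
`x′(t) ≤ x(t)(b − a x(t − τ(t)))` for `t ≥ t₀`, then
`limsup_{t→∞} x(t) ≤ (b/a) e^{b τ̄}`. -/
theorem limsup_le_of_delay_ineq_explicit_continuous_d_zero
    (a b t₀ τbar : ℝ) (τ x x' : ℝ → ℝ)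
    (ha : 0 < a) (hb : 0 ≤ b) (hτbar : 0 ≤ τbar)
    (hτcont : Continuous τ) (hτ : ∀ t : ℝ, 0 ≤ τ t ∧ τ t ≤ τbar)
    (hxcont : ContinuousOn x (Set.Ici (t₀ - τbar)))
    (hxpos : ∀ t : ℝ, t₀ - τbar ≤ t → 0 < x t)
    (hderiv : ∀ t : ℝ, t₀ ≤ t → HasDerivAt x (x' t) t)
    (hineq : ∀ t : ℝ, t₀ ≤ t → x' t ≤ x t * (b - a * x (t - τ t))) :
    Filter.limsup (fun t : ℝ => ((x t : EReal))) Filter.atTop ≤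
      ((b / a * Real.exp (b * τbar) : ℝ) : EReal) := by
  set M : ℝ := b / a * Real.exp (b * τbar) with hM
  have hMnonneg : 0 ≤ M := by positivity
  set e : ℝ := Real.exp (-(b * τbar)) with he
  have hepos : 0 < e := Real.exp_pos _
  have haeM : a * e * M = b := by
    rw [hM, he, Real.exp_neg]
    field_simp
  have hsub : Set.Ici t₀ ⊆ Set.Ici (t₀ - τbar) := Set.Ici_subset_Ici.2 (by linarith)
  have hxc : ContinuousOn x (Set.Ici t₀) := hxcont.mono hsub
  -- delay argument stays in domain
  have hdelay_mem : ∀ t : ℝ, t₀ ≤ t → t₀ - τbar ≤ t - τ t := fun t ht => by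
    have := (hτ t).2; linarith
  -- x' t ≤ b * x t for t ≥ t₀
  have hlin : ∀ t : ℝ, t₀ ≤ t → x' t ≤ b * x t := by
    intro t ht
    have h1 := hineq t ht
    have h2 : 0 < x (t - τ t) := hxpos _ (hdelay_mem t ht)
    have h3 : 0 < x t := hxpos t (by linarith)
    nlinarith [mul_pos (mul_pos ha h3) h2]
  -- f t = x t * exp(-b t) is antitone on [t₀, ∞)
  have hdf : ∀ t : ℝ, t₀ ≤ t → HasDerivAt (fun s => x s * Real.exp (-(b * s)))
      (x' t * Real.exp (-(b * t)) + x t * (Real.exp (-(b * t)) * (-b))) t := by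
    intro t ht
    have h1 : HasDerivAt (fun s : ℝ => -(b * s)) (-b) t := by
      have h0 := ((hasDerivAt_id t).const_mul b).neg
      rw [mul_one] at h0
      exact h0
    exact (hderiv t ht).mul h1.exp
  have hf : AntitoneOn (fun s => x s * Real.exp (-(b * s))) (Set.Ici t₀) := by
    apply antitoneOn_of_deriv_nonpos (convex_Ici t₀)
    · exact hxc.mul (Real.continuous_exp.comp (continuous_const.mul continuous_id).neg).continuousOn
    · intro u hu
      rw [interior_Ici] at hu
      exact ((hdf u hu.le).differentiableAt).differentiableWithinAt
    · intro u hu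
      rw [interior_Ici] at hu
      rw [(hdf u hu.le).deriv]
      have h1 := hlin u hu.le
      have h2 : (0:ℝ) < Real.exp (-(b*u)) := Real.exp_pos _
      nlinarith
  -- key: x (t - τ t) ≥ e * x t for t ≥ t₀ + τbar
  have hkey : ∀ t : ℝ, t₀ + τbar ≤ t → e * x t ≤ x (t - τ t) := by
    intro t ht
    have hτt := hτ t
    have hm1 : t - τ t ∈ Set.Ici t₀ := by simp only [Set.mem_Ici]; linarith
    have hm2 : t ∈ Set.Ici t₀ := by simp only [Set.mem_Ici]; linarith
    have h := hf hm1 hm2 (by linarith)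
    have hxt : 0 < x t := hxpos t (by linarith)
    -- x t * exp(-bt) ≤ x(t-τt) * exp(-b(t-τt))
    have h1 : x t * Real.exp (-(b * τ t)) ≤ x (t - τ t) := by
      have heq : Real.exp (-(b * τ t)) = Real.exp (-(b * t)) * Real.exp (b * (t - τ t)) := by
        rw [← Real.exp_add]; ring_nf
      rw [heq, ← mul_assoc]
      calc x t * Real.exp (-(b * t)) * Real.exp (b * (t - τ t))
          ≤ x (t - τ t) * Real.exp (-(b * (t - τ t))) * Real.exp (b * (t - τ t)) := by
            apply mul_le_mul_of_nonneg_right h (Real.exp_pos _).le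
        _ = x (t - τ t) := by
            rw [mul_assoc, ← Real.exp_add, neg_add_cancel, Real.exp_zero, mul_one]
    have h2 : e ≤ Real.exp (-(b * τ t)) := by
      apply Real.exp_le_exp.2
      have := hτt.2
      nlinarith
    calc e * x t ≤ Real.exp (-(b * τ t)) * x t := by nlinarith
      _ = x t * Real.exp (-(b * τ t)) := mul_comm _ _
      _ ≤ x (t - τ t) := h1
  -- derivative bound when x t ≥ M + ε
  have hderneg : ∀ ε : ℝ, 0 < ε → ∀ t : ℝ, t₀ + τbar ≤ t → M + ε ≤ x t →
      x' t ≤ -(a * e * ε) * x t := by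
    intro ε hε t ht hxt
    have h1 := hineq t (by linarith)
    have h2 := hkey t ht
    have hxtpos : 0 < x t := hxpos t (by linarith)
    have h3 : b + a * e * ε ≤ a * x (t - τ t) := by
      nlinarith [mul_le_mul_of_nonneg_left h2 ha.le,
        mul_le_mul_of_nonneg_left hxt (mul_pos ha hepos).le]
    have h4 : b - a * x (t - τ t) ≤ -(a * e * ε) := by linarith
    nlinarith [mul_le_mul_of_nonneg_left h4 hxtpos.le]
  -- main eventual bound
  have main : ∀ ε : ℝ, 0 < ε → ∀ᶠ t in atTop, x t ≤ M + ε := by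
    intro ε hε
    set T₀ : ℝ := t₀ + τbar with hT₀
    -- there is some time ≥ T₀ where x ≤ M + ε
    have hB : ∃ t₁ : ℝ, T₀ ≤ t₁ ∧ x t₁ ≤ M + ε := by
      by_contra hcon
      push_neg at hcon
      set k : ℝ := a * e * ε * (M + ε) with hk
      have hkpos : 0 < k := by positivity
      have hg : AntitoneOn (fun s => x s + k * s) (Set.Ici T₀) := by
        apply antitoneOn_of_deriv_nonpos (convex_Ici T₀)
        · exact (hxc.mono (Set.Ici_subset_Ici.2 (by linarith))).add
            (continuous_const.mul continuous_id).continuousOn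
        · intro u hu
          rw [interior_Ici] at hu
          have := ((hderiv u (by simp only [Set.mem_Ioi] at hu; linarith)).add
            ((hasDerivAt_id u).const_mul k)).differentiableAt
          exact this.differentiableWithinAt
        · intro u hu
          rw [interior_Ici] at hu
          simp only [Set.mem_Ioi] at hu
          have hd : HasDerivAt (fun s => x s + k * s) (x' u + k * 1) u :=
            (hderiv u (by linarith)).add ((hasDerivAt_id u).const_mul k)
          rw [hd.deriv]
          have h1 := hderneg ε hε u hu.le (hcon u hu.le).le
          have h2 := hcon u hu.le
          have h3 : 0 < x u := hxpos u (by linarith)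
          nlinarith
      set t₂ : ℝ := T₀ + (x T₀ + 1) / k with ht₂
      have ht₂ge : T₀ ≤ t₂ := by
        have h1 : 0 < x T₀ := hxpos T₀ (by simp only [hT₀]; linarith)
        have : 0 < (x T₀ + 1) / k := by positivity
        rw [ht₂]; linarith
      have h5 : x t₂ + k * t₂ ≤ x T₀ + k * T₀ :=
        hg (Set.mem_Ici.2 le_rfl) (Set.mem_Ici.2 ht₂ge) ht₂ge
      have hxt₂ : 0 < x t₂ := hxpos t₂ (by simp only [hT₀] at ht₂ge ⊢; linarith)
      have hkk : k * t₂ = k * T₀ + (x T₀ + 1) := by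
        rw [ht₂]; field_simp
      nlinarith
    obtain ⟨t₁, ht₁, hxt₁⟩ := hB
    -- barrier: x stays ≤ M + ε after t₁
    rw [eventually_atTop]
    refine ⟨t₁, fun t ht => ?_⟩
    by_contra hcon
    push_neg at hcon
    have ht₁t : t₁ < t := by
      rcases lt_or_eq_of_le ht with h | h
      · exact h
      · exfalso; rw [← h] at hcon; linarith
    set S : Set ℝ := Set.Icc t₁ t ∩ x ⁻¹' Set.Iic (M + ε) with hS
    have hSne : S.Nonempty := ⟨t₁, ⟨le_refl _, ht₁t.le⟩, hxt₁⟩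
    have hScl : IsClosed S := by
      apply ContinuousOn.preimage_isClosed_of_isClosed
        (hxc.mono (fun u hu => Set.mem_Ici.2 (by
          have h1 : t₁ ≤ u := hu.1
          simp only [hT₀] at ht₁; linarith))) isClosed_Icc isClosed_Iic
    have hSbdd : BddAbove S := ⟨t, fun u hu => hu.1.2⟩
    set s₀ : ℝ := sSup S with hs₀
    have hs₀mem : s₀ ∈ S := hScl.csSup_mem hSne hSbdd
    have hs₀le : x s₀ ≤ M + ε := hs₀mem.2
    have hs₀t : s₀ < t := by
      rcases lt_or_eq_of_le hs₀mem.1.2 with h | h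
      · exact h
      · exfalso; rw [h] at hs₀le; linarith
    have hs₀t₁ : t₁ ≤ s₀ := hs₀mem.1.1
    -- on (s₀, t], x > M + ε
    have habove : ∀ u : ℝ, s₀ < u → u ≤ t → M + ε < x u := by
      intro u h1 h2
      by_contra h3
      push_neg at h3
      have : u ∈ S := ⟨⟨by linarith, h2⟩, h3⟩
      have := le_csSup hSbdd this
      linarith
    have hanti : StrictAntiOn x (Set.Icc s₀ t) := by
      apply strictAntiOn_of_deriv_neg (convex_Icc s₀ t)
      · exact hxc.mono (fun u hu => Set.mem_Ici.2 (by
          have h1 : s₀ ≤ u := hu.1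
          simp only [hT₀] at ht₁; linarith))
      · intro u hu
        rw [interior_Icc] at hu
        have hu1 := hu.1
        have hu2 := hu.2
        have huT₀ : t₀ + τbar ≤ u := by simp only [hT₀] at ht₁; linarith
        rw [(hderiv u (by linarith)).deriv]
        have h1 := hderneg ε hε u huT₀ (habove u hu1 hu2.le).le
        have h2 : 0 < x u := hxpos u (by linarith)
        nlinarith [mul_pos (mul_pos (mul_pos ha hepos) hε) h2]
    have := hanti (Set.left_mem_Icc.2 hs₀t.le) (Set.right_mem_Icc.2 hs₀t.le) hs₀t
    linarith
  -- conclude limsup bound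
  by_contra hcon
  push_neg at hcon
  rcases EReal.lt_iff_exists_real_btwn.1 hcon with ⟨r, hr1, hr2⟩
  have hrM : M < r := by exact_mod_cast hr1
  have h1 : Filter.limsup (fun t : ℝ => ((x t : EReal))) Filter.atTop ≤ ((r : ℝ) : EReal) := by
    apply Filter.limsup_le_of_le (by isBoundedDefault)
    filter_upwards [main (r - M) (by linarith)] with t ht
    exact EReal.coe_le_coe_iff.2 (by linarith)
  exact absurd (lt_of_lt_of_le hr2 h1) (lt_irrefl _)
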